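/- Define the level of a long root α by L(α) = ht^∨(α̃) − ht^∨(α) if α > 0, and L(α) = ht^∨(α̃) − ht^∨(α) − 1 if α < 0. If x ∈ W satisfies x(β) = α for long roots α, β, then l(x) ≥ |L(α) − L(β)|. -/

import Mathlib

open scoped RealInnerProductSpace

variable {V : Type*} [NormedAddCommGroup V] [InnerProductSpace ℝ V]

/-- An irreducible reduced (crystallographic) root system in a real inner product space. -/
structure IsIrredRootSystem (Φ : Set V) : Prop where
  finite : Φ.Finite
  nonempty : Φ.Nonempty
  nonzero : (0 : V) ∉ Φ
  spanning : Submodule.span ℝ Φ = ⊤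
  reflect_mem : ∀ α ∈ Φ, ∀ β ∈ Φ, β - (2 * ⟪α, β⟫ / ⟪α, α⟫) • α ∈ Φ
  crystallographic : ∀ α ∈ Φ, ∀ β ∈ Φ, ∃ n : ℤ, 2 * ⟪α, β⟫ / ⟪α, α⟫ = (n : ℝ)
  reduced : ∀ α ∈ Φ, ∀ t : ℝ, t • α ∈ Φ → t = 1 ∨ t = -1
  irreducible : ∀ Φ₁ Φ₂ : Set V, Φ₁ ∪ Φ₂ = Φ →
    (∀ α ∈ Φ₁, ∀ β ∈ Φ₂, ⟪α, β⟫ = 0) → Φ₁ = ∅ ∨ Φ₂ = ∅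

/-- `Δ` is a base (system of simple roots) for `Φ`: it is contained in `Φ`, linearly
independent, and every root is an integral combination of `Δ` with coefficients all of
the same sign. -/
def IsBase (Φ : Set V) (Δ : Finset V) : Prop :=
  (Δ : Set V) ⊆ Φ ∧ LinearIndependent ℝ (fun a : Δ => (a : V)) ∧
    ∀ γ ∈ Φ, ∃ c : V → ℤ, γ = ∑ α ∈ Δ, (c α : ℝ) • α ∧
      ((∀ α ∈ Δ, 0 ≤ c α) ∨ (∀ α ∈ Δ, c α ≤ 0))

/-- The positive roots with respect to the base `Δ`. -/
def posRoots (Φ : Set V) (Δ : Finset V) : Set V :=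
  {γ ∈ Φ | ∃ c : V → ℕ, γ = ∑ α ∈ Δ, (c α : ℝ) • α}

/-- The coroot `γ^∨ = 2γ/(γ|γ)` of a root `γ`. -/
noncomputable def coroot (γ : V) : V := (2 / ⟪γ, γ⟫) • γ

/-- The set of reflections in the roots of `Φ`, as linear automorphisms of `V`. -/
def reflections (Φ : Set V) : Set (V ≃ₗ[ℝ] V) :=
  {w | ∃ α ∈ Φ, ∀ v, w v = v - (2 * ⟪α, v⟫ / ⟪α, α⟫) • α}

/-- The Weyl group of `Φ`: the group generated by the reflections in the roots. -/
def weylGroup (Φ : Set V) : Subgroup (V ≃ₗ[ℝ] V) := Subgroup.closure (reflections Φ)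

/-- The simple reflections with respect to the base `Δ`. -/
def simpleReflections (Δ : Finset V) : Set (V ≃ₗ[ℝ] V) :=
  {w | ∃ α ∈ Δ, ∀ v, w v = v - (2 * ⟪α, v⟫ / ⟪α, α⟫) • α}

/-- The length of `w` with respect to the simple reflections determined by `Δ`. -/
noncomputable def len (Δ : Finset V) (w : V ≃ₗ[ℝ] V) : ℕ :=
  sInf {n | ∃ L : List (V ≃ₗ[ℝ] V),
    (∀ s ∈ L, s ∈ simpleReflections Δ) ∧ L.length = n ∧ L.prod = w}

/-- `t` is the highest root of `Φ` with respect to the base `Δ`. -/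
def IsHighestRoot (Φ : Set V) (Δ : Finset V) (t : V) : Prop :=
  t ∈ Φ ∧ ∀ α ∈ Φ, ∃ c : V → ℕ, t - α = ∑ a ∈ Δ, (c a : ℝ) • a

noncomputable def rfl' (γ : V) (h : ⟪γ, γ⟫ ≠ 0) : V ≃ₗ[ℝ] V :=
  Module.reflection (f := (2 / ⟪γ, γ⟫) • innerₗ V γ) (x := γ)
    (by simp only [LinearMap.smul_apply, innerₗ_apply_apply, smul_eq_mul]; field_simp)

lemma rfl'_apply (γ : V) (h : ⟪γ, γ⟫ ≠ 0) (v : V) :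
    rfl' γ h v = v - (2 * ⟪γ, v⟫ / ⟪γ, γ⟫) • γ := by
  rw [rfl', Module.reflection_apply]
  simp only [LinearMap.smul_apply, innerₗ_apply_apply, smul_eq_mul]
  rw [div_mul_eq_mul_div]

lemma rfl'_invol (γ : V) (h : ⟪γ, γ⟫ ≠ 0) (v : V) : rfl' γ h (rfl' γ h v) = v :=
  Module.involutive_reflection _ v

lemma rfl'_inv (γ : V) (h : ⟪γ, γ⟫ ≠ 0) : (rfl' γ h)⁻¹ = rfl' γ h := by
  ext v
  exact congrFun (congrArg _ (Module.reflection_symm _)) v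

lemma rfl'_selfadj (γ : V) (h : ⟪γ, γ⟫ ≠ 0) (u v : V) :
    ⟪rfl' γ h u, v⟫ = ⟪u, rfl' γ h v⟫ := by
  simp only [rfl'_apply, inner_sub_left, inner_sub_right, real_inner_smul_left,
    real_inner_smul_right]
  rw [real_inner_comm u γ]
  ring

lemma rfl'_norm (γ : V) (h : ⟪γ, γ⟫ ≠ 0) (u : V) :
    ⟪rfl' γ h u, rfl' γ h u⟫ = ⟪u, u⟫ := by
  rw [rfl'_selfadj, rfl'_invol]

section Lemmas

variable {Φ : Set V} {Δ : Finset V}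

lemma root_ne_zero (hΦ : IsIrredRootSystem Φ) {β : V} (hβ : β ∈ Φ) : β ≠ 0 :=
  fun h => hΦ.nonzero (h ▸ hβ)

lemma root_inner_pos (hΦ : IsIrredRootSystem Φ) {β : V} (hβ : β ∈ Φ) : 0 < ⟪β, β⟫ :=
  lt_of_le_of_ne real_inner_self_nonneg
    (fun h => (root_ne_zero hΦ hβ) (inner_self_eq_zero.mp h.symm))

lemma root_inner_ne (hΦ : IsIrredRootSystem Φ) {β : V} (hβ : β ∈ Φ) : ⟪β, β⟫ ≠ 0 :=
  ne_of_gt (root_inner_pos hΦ hβ)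

lemma rfl'_root (hΦ : IsIrredRootSystem Φ) {γ β : V} (hγ : γ ∈ Φ) (hβ : β ∈ Φ)
    (h : ⟪γ, γ⟫ ≠ 0) : rfl' γ h β ∈ Φ := by
  rw [rfl'_apply]; exact hΦ.reflect_mem γ hγ β hβ

lemma neg_root (hΦ : IsIrredRootSystem Φ) {β : V} (hβ : β ∈ Φ) : -β ∈ Φ := by
  have h := hΦ.reflect_mem β hβ β hβ
  have hc := root_inner_ne hΦ hβ
  rw [mul_div_assoc, div_self hc, mul_one, two_smul] at h
  convert h using 1
  abel

lemma coeff_unique (hΔ : IsBase Φ Δ) (c d : V → ℝ)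
    (h : ∑ a ∈ Δ, c a • a = ∑ a ∈ Δ, d a • a) : ∀ a ∈ Δ, c a = d a := by
  have hli := hΔ.2.1
  have h0 : ∑ a ∈ Finset.univ (α := Δ), (c a.1 - d a.1) • (a.1 : V) = 0 := by
    rw [Finset.univ_eq_attach]
    rw [Finset.sum_attach Δ (fun v => (c v - d v) • v)]
    simp only [sub_smul, Finset.sum_sub_distrib, h, sub_self]
  intro a ha
  have := Fintype.linearIndependent_iff.mp hli (fun a => c a.1 - d a.1) h0 ⟨a, ha⟩
  linarith [this]

lemma pos_or_neg (hΦ : IsIrredRootSystem Φ) (hΔ : IsBase Φ Δ) {β : V} (hβ : β ∈ Φ) :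
    β ∈ posRoots Φ Δ ∨ -β ∈ posRoots Φ Δ := by
  obtain ⟨c, hc, hsign | hsign⟩ := hΔ.2.2 β hβ
  · left
    refine ⟨hβ, fun v => (c v).toNat, ?_⟩
    rw [hc]
    refine Finset.sum_congr rfl fun a ha => ?_
    congr 1
    exact_mod_cast (Int.toNat_of_nonneg (hsign a ha)).symm
  · right
    refine ⟨neg_root hΦ hβ, fun v => (-c v).toNat, ?_⟩
    rw [hc, ← Finset.sum_neg_distrib]
    refine Finset.sum_congr rfl fun a ha => ?_
    rw [← neg_smul]
    congr 1
    have h0 : (0:ℤ) ≤ -c a := by linarith [hsign a ha]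
    have h1 := Int.toNat_of_nonneg h0
    show -((c a : ℤ):ℝ) = (((-c a).toNat : ℕ):ℝ)
    exact_mod_cast h1.symm

lemma not_both (hΦ : IsIrredRootSystem Φ) (hΔ : IsBase Φ Δ) {β : V}
    (h1 : β ∈ posRoots Φ Δ) : -β ∉ posRoots Φ Δ := by
  rintro ⟨-, d, hd⟩
  obtain ⟨hβΦ, c, hc⟩ := h1
  have hsum : ∑ a ∈ Δ, ((c a : ℝ) + (d a : ℝ)) • a = ∑ a ∈ Δ, (0:ℝ) • a := by
    simp only [add_smul, Finset.sum_add_distrib, ← hc, ← hd]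
    simp
  have hz := coeff_unique hΔ _ _ hsum
  have hβ0 : β = 0 := by
    rw [hc]
    refine Finset.sum_eq_zero fun a ha => ?_
    have h1 := hz a ha
    have h2 : (0:ℝ) ≤ (c a : ℝ) := Nat.cast_nonneg _
    have h3 : (0:ℝ) ≤ (d a : ℝ) := Nat.cast_nonneg _
    have hca : (c a : ℝ) = 0 := by linarith
    rw [hca, zero_smul]
  exact root_ne_zero hΦ hβΦ hβ0

lemma simple_pos (hΔ : IsBase Φ Δ) {γ : V} (hγ : γ ∈ Δ) : γ ∈ posRoots Φ Δ := by
  classical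
  refine ⟨hΔ.1 hγ, fun v => if v = γ then 1 else 0, ?_⟩
  rw [Finset.sum_congr rfl (fun a _ => ?_), Finset.sum_ite_eq' Δ γ (fun a => (1:ℝ) • a),
    if_pos hγ, one_smul]
  · split_ifs with h <;> simp [h]

lemma lemA (hΦ : IsIrredRootSystem Φ) (hΔ : IsBase Φ Δ) {γ β : V} (hγ : γ ∈ Δ)
    (hβ : β ∈ posRoots Φ Δ) (hne : β ≠ γ) (h : ⟪γ, γ⟫ ≠ 0) :
    rfl' γ h β ∈ posRoots Φ Δ := by
  classical
  have hγΦ : γ ∈ Φ := hΔ.1 hγ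
  obtain ⟨hβΦ, c, hc⟩ := hβ
  obtain ⟨n, hn⟩ := hΦ.crystallographic γ hγΦ β hβΦ
  have hβ'Φ : rfl' γ h β ∈ Φ := rfl'_root hΦ hγΦ hβΦ h
  have hβ'eq : rfl' γ h β = β - (n:ℝ) • γ := by rw [rfl'_apply, hn]
  rcases pos_or_neg hΦ hΔ hβ'Φ with hp | hp
  · exact hp
  exfalso
  obtain ⟨-, d, hd⟩ := hp
  have hite : ∑ a ∈ Δ, ((if a = γ then (n:ℝ) else 0)) • a = (n:ℝ) • γ := by
    rw [Finset.sum_eq_single γ]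
    · rw [if_pos rfl]
    · intro b hb hbne
      rw [if_neg hbne, zero_smul]
    · intro hns
      exact absurd hγ hns
  have hsum : ∑ a ∈ Δ, ((c a : ℝ) + (d a : ℝ)) • a
      = ∑ a ∈ Δ, (if a = γ then (n:ℝ) else 0) • a := by
    rw [hite]
    simp only [add_smul, Finset.sum_add_distrib, ← hc, ← hd]
    rw [hβ'eq]
    abel
  have hz := coeff_unique hΔ _ _ hsum
  have hβγ : β = (c γ : ℝ) • γ := by
    rw [hc]
    rw [Finset.sum_eq_single γ]
    · intro a ha hne'
      have h1 := hz a ha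
      rw [if_neg hne'] at h1
      have h2 : (0:ℝ) ≤ (c a : ℝ) := Nat.cast_nonneg _
      have h3 : (0:ℝ) ≤ (d a : ℝ) := Nat.cast_nonneg _
      have hca : (c a : ℝ) = 0 := by linarith
      rw [hca, zero_smul]
    · intro hns
      exact absurd hγ hns
  have := hΦ.reduced γ hγΦ (c γ : ℝ) (hβγ ▸ hβΦ)
  rcases this with h1 | h1
  · exact hne (by rw [hβγ, h1, one_smul])
  · have h2 : (0:ℝ) ≤ (c γ : ℝ) := Nat.cast_nonneg _
    linarith

lemma cartan_le_one (hΦ : IsIrredRootSystem Φ) {r : ℝ}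
    (hr : IsGreatest {x : ℝ | ∃ α ∈ Φ, x = ⟪α, α⟫} r) {γ β : V}
    (hγ : γ ∈ Φ) (hβ : β ∈ Φ) (hβr : ⟪β, β⟫ = r) (h1 : γ ≠ β) (h2 : γ ≠ -β) :
    |2 * ⟪γ, β⟫ / r| ≤ 1 := by
  have hcpos : 0 < ⟪γ, γ⟫ := root_inner_pos hΦ hγ
  have hrpos : 0 < r := hβr ▸ root_inner_pos hΦ hβ
  have hcr : ⟪γ, γ⟫ ≤ r := hr.2 ⟨γ, hγ, rfl⟩
  have hba : ⟪β, γ⟫ = ⟪γ, β⟫ := real_inner_comm γ β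
  have hstrict : ⟪γ, β⟫ ^ 2 < ⟪γ, γ⟫ * r := by
    by_contra hcon
    push_neg at hcon
    have hw : ⟪⟪γ, γ⟫ • β - ⟪γ, β⟫ • γ, ⟪γ, γ⟫ • β - ⟪γ, β⟫ • γ⟫
        = ⟪γ, γ⟫ * (⟪γ, γ⟫ * r - ⟪γ, β⟫ ^ 2) := by
      simp only [inner_sub_left, inner_sub_right, real_inner_smul_left, real_inner_smul_right,
        hβr, hba]
      ring
    have hw0 : ⟪⟪γ, γ⟫ • β - ⟪γ, β⟫ • γ, ⟪γ, γ⟫ • β - ⟪γ, β⟫ • γ⟫ ≤ 0 := by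
      rw [hw]
      nlinarith
    have hwz : ⟪γ, γ⟫ • β - ⟪γ, β⟫ • γ = 0 := by
      have := le_antisymm hw0 real_inner_self_nonneg
      exact inner_self_eq_zero.mp this
    have hβeq : β = (⟪γ, β⟫ / ⟪γ, γ⟫) • γ := by
      rw [sub_eq_zero] at hwz
      have hb : β = (1/⟪γ, γ⟫) • (⟪γ, γ⟫ • β) := by
        rw [smul_smul, one_div_mul_cancel (ne_of_gt hcpos), one_smul]
      rw [hwz, smul_smul] at hb
      have hsc : 1/⟪γ, γ⟫ * ⟪γ, β⟫ = ⟪γ, β⟫/⟪γ, γ⟫ := by ring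
      rw [hsc] at hb
      exact hb
    rcases hΦ.reduced γ hγ (⟪γ, β⟫ / ⟪γ, γ⟫) (hβeq ▸ hβ) with hh | hh
    · have hbb : β = γ := by rw [hβeq, hh, one_smul]
      exact h1 hbb.symm
    · have hbb : β = -γ := by rw [hβeq, hh, neg_one_smul]
      have : γ = -β := by rw [hbb, neg_neg]
      exact h2 this
  obtain ⟨k, hk⟩ := hΦ.crystallographic β hβ γ hγ
  have hk' : 2 * ⟪γ, β⟫ / r = (k:ℝ) := by rw [← hk, hba, hβr]
  rw [hk']
  have hm2 : (2 * ⟪γ, β⟫ / r) ^ 2 < 4 := by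
    rw [div_pow, div_lt_iff₀ (by positivity)]
    nlinarith
  rw [hk'] at hm2
  have hck : (k:ℝ)^2 < 2^2 := by nlinarith
  have hk2 : k^2 < 2^2 := by exact_mod_cast hck
  have h4 : |k| ≤ 1 := by nlinarith [sq_abs k, abs_nonneg k]
  rw [← Int.cast_abs]
  exact_mod_cast h4

end Lemmas

open Classical in
noncomputable def lev (Φ : Set V) (Δ : Finset V) (f : V →ₗ[ℝ] ℝ) (t : V) (v : V) : ℝ :=
  f (coroot t) - f (coroot v) - (if v ∈ posRoots Φ Δ then 0 else 1)

section Step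

variable {Φ : Set V} {Δ : Finset V}

lemma coroot_neg (v : V) : coroot (-v) = -coroot v := by
  simp [coroot, inner_neg_neg]

lemma f_coroot (f : V →ₗ[ℝ] ℝ) {v : V} (hv : ⟪v, v⟫ ≠ 0) :
    f (coroot v) = 2 / ⟪v, v⟫ * f v := by
  simp [coroot]

lemma step (hΦ : IsIrredRootSystem Φ) (hΔ : IsBase Φ Δ) {r : ℝ}
    (hr : IsGreatest {x : ℝ | ∃ α ∈ Φ, x = ⟪α, α⟫} r)
    (f : V →ₗ[ℝ] ℝ) (hf : ∀ a ∈ Δ, f (coroot a) = 1) (t : V)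
    {γ β : V} (hγ : γ ∈ Δ) (hβ : β ∈ Φ) (hβr : ⟪β, β⟫ = r) (h : ⟪γ, γ⟫ ≠ 0) :
    |lev Φ Δ f t (rfl' γ h β) - lev Φ Δ f t β| ≤ 1 := by
  classical
  have hγΦ : γ ∈ Φ := hΔ.1 hγ
  have hrpos : 0 < r := hβr ▸ root_inner_pos hΦ hβ
  have hγpos : γ ∈ posRoots Φ Δ := simple_pos hΔ hγ
  have hfγ : f γ = ⟪γ, γ⟫ / 2 := by
    have := hf γ hγ
    rw [f_coroot f h] at this
    field_simp at this ⊢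
    linarith
  by_cases hc1 : γ = β
  · -- reflection sends β = γ to -γ
    subst hc1
    have hβ' : rfl' γ h γ = -γ := by
      rw [rfl'_apply]
      have hsc : 2 * ⟪γ, γ⟫ / ⟪γ, γ⟫ = 2 := by field_simp
      rw [hsc]
      module
    rw [hβ', lev, lev]
    rw [coroot_neg, map_neg]
    rw [if_pos hγpos, if_neg (not_both hΦ hΔ hγpos), hf γ hγ]
    norm_num
  by_cases hc2 : γ = -β
  · -- β = -γ, reflection sends it to γ
    have hβeq : β = -γ := by rw [hc2, neg_neg]
    subst hβeq
    have hβ' : rfl' γ h (-γ) = γ := by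
      rw [rfl'_apply]
      have hsc : 2 * ⟪γ, -γ⟫ / ⟪γ, γ⟫ = -2 := by
        rw [inner_neg_right]
        field_simp
      rw [hsc]
      module
    rw [hβ', lev, lev]
    rw [coroot_neg, map_neg]
    rw [if_pos hγpos, if_neg (not_both hΦ hΔ hγpos), hf γ hγ]
    norm_num
  · -- generic case
    have hβ'Φ : rfl' γ h β ∈ Φ := rfl'_root hΦ hγΦ hβ h
    have hβ'r : ⟪rfl' γ h β, rfl' γ h β⟫ = r := by rw [rfl'_norm, hβr]
    have hm : |2 * ⟪γ, β⟫ / r| ≤ 1 := cartan_le_one hΦ hr hγΦ hβ hβr hc1 hc2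
    -- coroot heights
    have hfc : f (coroot (rfl' γ h β)) = f (coroot β) - 2 * ⟪γ, β⟫ / r := by
      rw [f_coroot f (by rw [hβ'r]; exact ne_of_gt hrpos),
        f_coroot f (by rw [hβr]; exact ne_of_gt hrpos), hβ'r, hβr, rfl'_apply, map_sub, map_smul,
        smul_eq_mul, hfγ]
      field_simp
    -- positivity is preserved
    have hsign : (rfl' γ h β ∈ posRoots Φ Δ) ↔ (β ∈ posRoots Φ Δ) := by
      constructor
      · intro hp
        by_contra hnp
        rcases pos_or_neg hΦ hΔ hβ with hq | hq
        · exact hnp hq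
        · have hne : -β ≠ γ := fun hh => hc2 (by rw [← hh])
          have := lemA hΦ hΔ hγ hq hne h
          have hmap : rfl' γ h (-β) = -(rfl' γ h β) := map_neg _ β
          rw [hmap] at this
          exact not_both hΦ hΔ this (by rwa [neg_neg])
      · intro hp
        exact lemA hΦ hΔ hγ hp (fun hh => hc1 hh.symm) h
    rw [lev, lev, hfc]
    by_cases hp : β ∈ posRoots Φ Δ
    · rw [if_pos hp, if_pos (hsign.mpr hp)]
      calc |f (coroot t) - (f (coroot β) - 2 * ⟪γ, β⟫ / r) - 0 - (f (coroot t) - f (coroot β) - 0)|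
          = |2 * ⟪γ, β⟫ / r| := by ring_nf
        _ ≤ 1 := hm
    · rw [if_neg hp, if_neg (fun hh => hp (hsign.mp hh))]
      calc |f (coroot t) - (f (coroot β) - 2 * ⟪γ, β⟫ / r) - 1 - (f (coroot t) - f (coroot β) - 1)|
          = |2 * ⟪γ, β⟫ / r| := by ring_nf
        _ ≤ 1 := hm

end Step

section Main

variable {Φ : Set V} {Δ : Finset V}

lemma mulApply (f g : V ≃ₗ[ℝ] V) (v : V) : (f * g) v = f (g v) := rfl

lemma list_bound (hΦ : IsIrredRootSystem Φ) (hΔ : IsBase Φ Δ) {r : ℝ}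
    (hr : IsGreatest {x : ℝ | ∃ α ∈ Φ, x = ⟪α, α⟫} r)
    (f : V →ₗ[ℝ] ℝ) (hf : ∀ a ∈ Δ, f (coroot a) = 1) (t : V) :
    ∀ L : List (V ≃ₗ[ℝ] V), (∀ s ∈ L, s ∈ simpleReflections Δ) →
    ∀ β, β ∈ Φ → ⟪β, β⟫ = r →
      L.prod β ∈ Φ ∧ ⟪L.prod β, L.prod β⟫ = r ∧
        |lev Φ Δ f t (L.prod β) - lev Φ Δ f t β| ≤ (L.length : ℝ) := by
  intro L
  induction L with
  | nil =>
    intro _ β hβ hβr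
    simp only [List.prod_nil, List.length_nil, Nat.cast_zero]
    refine ⟨by simpa using hβ, by simpa using hβr, by simp⟩
  | cons s L ih =>
    intro hmem β hβ hβr
    obtain ⟨hΦ1, hr1, hb1⟩ := ih (fun u hu => hmem u (List.mem_cons_of_mem s hu)) β hβ hβr
    obtain ⟨γ, hγ, hs⟩ := hmem s (List.mem_cons_self (a := s) (l := L))
    have h0 : ⟪γ, γ⟫ ≠ 0 := root_inner_ne hΦ (hΔ.1 hγ)
    have hseq : s = rfl' γ h0 := LinearEquiv.ext fun v => by rw [hs v, rfl'_apply]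
    have hprod : (s :: L).prod β = rfl' γ h0 (L.prod β) := by
      rw [List.prod_cons, mulApply, hseq]
    refine ⟨by rw [hprod]; exact rfl'_root hΦ (hΔ.1 hγ) hΦ1 h0,
      by rw [hprod, rfl'_norm]; exact hr1, ?_⟩
    have hstep := step hΦ hΔ hr f hf t hγ hΦ1 hr1 h0
    have htri := abs_sub_le (lev Φ Δ f t ((s :: L).prod β)) (lev Φ Δ f t (L.prod β))
      (lev Φ Δ f t β)
    rw [hprod] at htri ⊢
    simp only [List.length_cons]
    push_cast
    linarith

lemma gen_pos (hΦ : IsIrredRootSystem Φ) (hΔ : IsBase Φ Δ) :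
    ∀ n : ℕ, ∀ β, β ∈ posRoots Φ Δ → ∀ c : V → ℕ, β = ∑ a ∈ Δ, (c a : ℝ) • a →
      ∑ a ∈ Δ, c a = n → ∀ h : ⟪β, β⟫ ≠ 0,
      rfl' β h ∈ Subgroup.closure (simpleReflections Δ) := by
  intro n
  induction n using Nat.strong_induction_on with
  | _ n ih =>
  intro β hβ c hc hn h
  classical
  have hβΦ : β ∈ Φ := hβ.1
  by_cases hβΔ : β ∈ Δ
  · exact Subgroup.subset_closure ⟨β, hβΔ, fun v => rfl'_apply β h v⟩
  have hip : 0 < ⟪β, β⟫ := root_inner_pos hΦ hβΦ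
  have hsum : ⟪β, β⟫ = ∑ a ∈ Δ, (c a : ℝ) * ⟪a, β⟫ := by
    nth_rewrite 1 [hc]
    rw [sum_inner]
    exact Finset.sum_congr rfl fun a _ => real_inner_smul_left _ _ _
  have hex : ∃ γ ∈ Δ, 0 < (c γ : ℝ) * ⟪γ, β⟫ := by
    by_contra hcon
    push_neg at hcon
    have := hsum ▸ Finset.sum_nonpos hcon
    linarith
  obtain ⟨γ, hγ, hpos⟩ := hex
  have hγΦ : γ ∈ Φ := hΔ.1 hγ
  have hγ0 : ⟪γ, γ⟫ ≠ 0 := root_inner_ne hΦ hγΦ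
  have hγβpos : 0 < ⟪γ, β⟫ := by
    rcases lt_trichotomy (⟪γ, β⟫) 0 with hh | hh | hh
    · nlinarith [show (0:ℝ) ≤ (c γ : ℝ) from Nat.cast_nonneg _]
    · rw [hh, mul_zero] at hpos; linarith
    · exact hh
  obtain ⟨m, hm⟩ := hΦ.crystallographic γ hγΦ β hβΦ
  have hm1 : 1 ≤ m := by
    have hh : (0:ℝ) < (m:ℝ) := by
      rw [← hm]
      exact div_pos (by linarith) (root_inner_pos hΦ hγΦ)
    have : (0:ℤ) < m := by exact_mod_cast hh
    omega
  have hne : β ≠ γ := fun hh => hβΔ (hh ▸ hγ)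
  have hβ'mem := lemA hΦ hΔ hγ ⟨hβΦ, c, hc⟩ hne hγ0
  set β' := rfl' γ hγ0 β with hβ'def
  obtain ⟨hβ'Φ, d, hd⟩ := hβ'mem
  have hβ'eq : β' = β - (m:ℝ) • γ := by rw [hβ'def, rfl'_apply, hm]
  have hite : ∑ a ∈ Δ, ((if a = γ then (m:ℝ) else 0)) • a = (m:ℝ) • γ := by
    rw [Finset.sum_eq_single γ]
    · rw [if_pos rfl]
    · intro b hb hbne
      rw [if_neg hbne, zero_smul]
    · intro hns
      exact absurd hγ hns
  have hsum2 : ∑ a ∈ Δ, (d a : ℝ) • a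
      = ∑ a ∈ Δ, ((c a : ℝ) - (if a = γ then (m:ℝ) else 0)) • a := by
    simp only [sub_smul, Finset.sum_sub_distrib, hite]
    rw [← hd, ← hc, ← hβ'eq]
  have hz := coeff_unique hΔ _ _ hsum2
  have hdγ : (d γ : ℝ) = (c γ : ℝ) - (m:ℝ) := by
    have := hz γ hγ
    rwa [if_pos rfl] at this
  have hlt : ∑ a ∈ Δ, d a < n := by
    rw [← hn]
    refine Finset.sum_lt_sum (fun a ha => ?_) ⟨γ, hγ, ?_⟩
    · by_cases hha : a = γ
      · subst hha
        have hcast : (d a : ℝ) ≤ (c a : ℝ) := by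
          rw [hdγ]
          have : (1:ℝ) ≤ (m:ℝ) := by exact_mod_cast hm1
          linarith
        exact_mod_cast hcast
      · have := hz a ha
        rw [if_neg hha, sub_zero] at this
        have : d a = c a := by exact_mod_cast this
        omega
    · have hcast : (d γ : ℝ) < (c γ : ℝ) := by
        rw [hdγ]
        have : (1:ℝ) ≤ (m:ℝ) := by exact_mod_cast hm1
        linarith
      exact_mod_cast hcast
  have hβ'0 : ⟪β', β'⟫ ≠ 0 := root_inner_ne hΦ hβ'Φ
  have hrec := ih (∑ a ∈ Δ, d a) hlt β' ⟨hβ'Φ, d, hd⟩ d hd rfl hβ'0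
  have hback : rfl' γ hγ0 β' = β := by rw [hβ'def]; exact rfl'_invol γ hγ0 β
  have h2 : ⟪β, β⟫ = ⟪β', β'⟫ := by
    rw [← hback]
    exact rfl'_norm γ hγ0 β'
  have hconj : rfl' β h = rfl' γ hγ0 * rfl' β' hβ'0 * rfl' γ hγ0 := by
    refine LinearEquiv.ext fun v => ?_
    have h1 : ⟪β', rfl' γ hγ0 v⟫ = ⟪β, v⟫ := by
      rw [← rfl'_selfadj γ hγ0 β' v, hback]
    rw [mulApply, mulApply, rfl'_apply β h v, rfl'_apply β' hβ'0 (rfl' γ hγ0 v),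
      map_sub, map_smul, rfl'_invol, hback, h1, ← h2]
  rw [hconj]
  have hγS : rfl' γ hγ0 ∈ Subgroup.closure (simpleReflections Δ) :=
    Subgroup.subset_closure ⟨γ, hγ, fun v => rfl'_apply γ hγ0 v⟩
  exact mul_mem (mul_mem hγS hrec) hγS

lemma rfl'_neg (β : V) (h : ⟪β, β⟫ ≠ 0) (h' : ⟪-β, -β⟫ ≠ 0) : rfl' (-β) h' = rfl' β h := by
  refine LinearEquiv.ext fun v => ?_
  rw [rfl'_apply, rfl'_apply, inner_neg_neg, inner_neg_left, smul_neg, mul_neg, neg_div,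
    neg_smul, neg_neg]

lemma reflections_sub (hΦ : IsIrredRootSystem Φ) (hΔ : IsBase Φ Δ) :
    reflections Φ ⊆ ↑(Subgroup.closure (simpleReflections Δ)) := by
  rintro w ⟨α, hα, hw⟩
  have h0 : ⟪α, α⟫ ≠ 0 := root_inner_ne hΦ hα
  have hw' : w = rfl' α h0 := LinearEquiv.ext fun v => by rw [hw v, rfl'_apply]
  rw [hw']
  rcases pos_or_neg hΦ hΔ hα with hp | hp
  · obtain ⟨c, hc⟩ := hp.2
    exact gen_pos hΦ hΔ (∑ a ∈ Δ, c a) α hp c hc rfl h0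
  · have h1 : ⟪-α, -α⟫ ≠ 0 := by rw [inner_neg_neg]; exact h0
    rw [← rfl'_neg α h0 h1]
    obtain ⟨c, hc⟩ := hp.2
    exact gen_pos hΦ hΔ (∑ a ∈ Δ, c a) (-α) hp c hc rfl h1

end Main

/-- Define the level of a long root `α` by
`L(α) = ht^∨(α̃) − ht^∨(α)` if `α > 0` and `L(α) = ht^∨(α̃) − ht^∨(α) − 1` if `α < 0`
(`ht^∨ = f ∘ coroot`, `f` being the linear functional with value `1` on each simple
coroot). If `x ∈ W` satisfies `x(β) = α` for long roots `α, β`, then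
`l(x) ≥ |L(α) − L(β)|`. -/
theorem level_diff_le_len (Φ : Set V) (hΦ : IsIrredRootSystem Φ)
    (Δ : Finset V) (hΔ : IsBase Φ Δ)
    (r : ℝ) (hr : IsGreatest {x : ℝ | ∃ α ∈ Φ, x = ⟪α, α⟫} r)
    (t : V) (ht : IsHighestRoot Φ Δ t)
    (f : V →ₗ[ℝ] ℝ) (hf : ∀ a ∈ Δ, f (coroot a) = 1)
    (α β : V) (hα : α ∈ Φ) (hαlg : ⟪α, α⟫ = r) (hβ : β ∈ Φ) (hβlg : ⟪β, β⟫ = r)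
    (Lα Lβ : ℝ)
    (hLαpos : α ∈ posRoots Φ Δ → Lα = f (coroot t) - f (coroot α))
    (hLαneg : α ∉ posRoots Φ Δ → Lα = f (coroot t) - f (coroot α) - 1)
    (hLβpos : β ∈ posRoots Φ Δ → Lβ = f (coroot t) - f (coroot β))
    (hLβneg : β ∉ posRoots Φ Δ → Lβ = f (coroot t) - f (coroot β) - 1)
    (x : V ≃ₗ[ℝ] V) (hx : x ∈ weylGroup Φ) (hxβ : x β = α) :
    |Lα - Lβ| ≤ (len Δ x : ℝ) := by
  classical
  have hLα : Lα = lev Φ Δ f t α := by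
    rw [lev]
    split_ifs with hp
    · rw [hLαpos hp]; ring
    · rw [hLαneg hp]
  have hLβ : Lβ = lev Φ Δ f t β := by
    rw [lev]
    split_ifs with hp
    · rw [hLβpos hp]; ring
    · rw [hLβneg hp]
  have hxc : x ∈ Subgroup.closure (simpleReflections Δ) :=
    (Subgroup.closure_le _).mpr (reflections_sub hΦ hΔ) hx
  have hxm : x ∈ Submonoid.closure (simpleReflections Δ ∪ (simpleReflections Δ)⁻¹) := by
    rw [← Subgroup.closure_toSubmonoid]
    exact hxc
  obtain ⟨l, hl, hlp⟩ := Submonoid.exists_list_of_mem_closure hxm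
  have hl' : ∀ s ∈ l, s ∈ simpleReflections Δ := by
    intro s hs
    rcases hl s hs with h1 | h1
    · exact h1
    · rw [Set.mem_inv] at h1
      obtain ⟨γ, hγ, hsv⟩ := h1
      have h0 : ⟪γ, γ⟫ ≠ 0 := root_inner_ne hΦ (hΔ.1 hγ)
      have hinv : s⁻¹ = rfl' γ h0 := LinearEquiv.ext fun v => by rw [hsv v, rfl'_apply]
      have hss : s = rfl' γ h0 := by rw [← rfl'_inv γ h0, ← hinv, inv_inv]
      exact hss ▸ ⟨γ, hγ, fun v => rfl'_apply γ h0 v⟩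
  have hne : {n | ∃ L : List (V ≃ₗ[ℝ] V),
      (∀ s ∈ L, s ∈ simpleReflections Δ) ∧ L.length = n ∧ L.prod = x}.Nonempty :=
    ⟨l.length, l, hl', rfl, hlp⟩
  have hmem : len Δ x ∈ {n | ∃ L : List (V ≃ₗ[ℝ] V),
      (∀ s ∈ L, s ∈ simpleReflections Δ) ∧ L.length = n ∧ L.prod = x} := Nat.sInf_mem hne
  obtain ⟨L, hL1, hL2, hL3⟩ := hmem
  obtain ⟨-, -, hb⟩ := list_bound hΦ hΔ hr f hf t L hL1 β hβ hβlg
  rw [hL3, hxβ] at hb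
  rw [hLα, hLβ, ← hL2]
  exact hb
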